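/- arXiv:0805.3087 — 15 statements merged into one kernel-verified Lean document; each statement's English description precedes it below -/
import Mathlib

section
/- If p₁ > 0 and p₂ > 0, then the two-player game with strategy sets S₁, S₂ and payoffs P₁, P₂ has at least one Nash equilibrium, i.e. there exist (α₀, β₀) ∈ S₁ and (γ₀, δ₀) ∈ S₂ such that P₁(α₀, β₀, γ₀, δ₀) ≥ P₁(α, β, γ₀, δ₀) for all (α, β) ∈ S₁ and P₂(α₀, β₀, γ₀, δ₀) ≥ P₂(α₀, β₀, γ, δ) for all (γ, δ) ∈ S₂. -/
open Filter

noncomputable section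

/-- Consumer I's strategy set. -/
def S1 (Y1 p1 p2 ρ a b : ℝ) : Prop :=
  0 ≤ a ∧ 0 ≤ b ∧ a * p1 + b * (p2 + ρ) ≤ Y1

/-- Consumer II's strategy set. -/
def S2 (Y2 p1 p2 ρ c d : ℝ) : Prop :=
  0 ≤ c ∧ 0 ≤ d ∧ c * (p1 + ρ) + d * p2 ≤ Y2

/-- Consumer I's payoff. -/
def P1 (q1 q2 a b c d : ℝ) : ℝ := min a q1 + min b (max 0 (q2 - d))

/-- Consumer II's payoff. -/
def P2 (q1 q2 a b c d : ℝ) : ℝ := min d q2 + min c (max 0 (q1 - a))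

/-- Nash equilibrium of the one-period game. -/
def NashEq (Y1 Y2 q1 q2 p1 p2 ρ a0 b0 c0 d0 : ℝ) : Prop :=
  S1 Y1 p1 p2 ρ a0 b0 ∧ S2 Y2 p1 p2 ρ c0 d0 ∧
  (∀ a b, S1 Y1 p1 p2 ρ a b → P1 q1 q2 a b c0 d0 ≤ P1 q1 q2 a0 b0 c0 d0) ∧
  (∀ c d, S2 Y2 p1 p2 ρ c d → P2 q1 q2 a0 b0 c d ≤ P2 q1 q2 a0 b0 c0 d0)

/-- Expenditure-minimal Nash equilibrium (selection rule SR1). -/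
def ExpMinNE (Y1 Y2 q1 q2 p1 p2 ρ a0 b0 c0 d0 : ℝ) : Prop :=
  NashEq Y1 Y2 q1 q2 p1 p2 ρ a0 b0 c0 d0 ∧
  (∀ a b, S1 Y1 p1 p2 ρ a b → P1 q1 q2 a b c0 d0 = P1 q1 q2 a0 b0 c0 d0 →
    a0 * p1 + b0 * (p2 + ρ) ≤ a * p1 + b * (p2 + ρ)) ∧
  (∀ c d, S2 Y2 p1 p2 ρ c d → P2 q1 q2 a0 b0 c d = P2 q1 q2 a0 b0 c0 d0 →
    c0 * (p1 + ρ) + d0 * p2 ≤ c * (p1 + ρ) + d * p2)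

lemma greedy (P Q Y k1 k2 : ℝ) (hP : 0 < P) (hQ : 0 < Q) (hPQ : P ≤ Q)
    (hY : 0 ≤ Y) (hk1 : 0 ≤ k1) (hk2 : 0 ≤ k2) :
    ∃ x y : ℝ, 0 ≤ x ∧ 0 ≤ y ∧ x ≤ k1 ∧ y ≤ k2 ∧ x * P + y * Q ≤ Y ∧
      x = min k1 (Y / P) ∧
      ∀ a b, 0 ≤ a → 0 ≤ b → a * P + b * Q ≤ Y → min a k1 + min b k2 ≤ x + y := by
  set x := min k1 (Y / P) with hx
  set y := min k2 ((Y - x * P) / Q) with hy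
  have hxP : x * P ≤ Y := by
    have h : x ≤ Y / P := min_le_right _ _
    calc x * P ≤ (Y / P) * P := by nlinarith
      _ = Y := by field_simp
  have hx0 : 0 ≤ x := le_min hk1 (div_nonneg hY hP.le)
  have hy0 : 0 ≤ y := le_min hk2 (div_nonneg (by linarith) hQ.le)
  have hyQ : y * Q ≤ Y - x * P := by
    have h : y ≤ (Y - x * P) / Q := min_le_right _ _
    calc y * Q ≤ ((Y - x * P) / Q) * Q := by nlinarith
      _ = Y - x * P := by field_simp
  refine ⟨x, y, hx0, hy0, min_le_left _ _, min_le_left _ _, by linarith, rfl, ?_⟩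
  intro a b ha hb hab
  have hu : min a k1 ≤ k1 := min_le_right _ _
  have hu' : min a k1 ≤ a := min_le_left _ _
  have hv : min b k2 ≤ k2 := min_le_right _ _
  have hv' : min b k2 ≤ b := min_le_left _ _
  have hu0 : 0 ≤ min a k1 := le_min ha hk1
  have hv0 : 0 ≤ min b k2 := le_min hb hk2
  have hbudget : (min a k1) * P + (min b k2) * Q ≤ Y := by nlinarith
  rcases le_total k1 (Y / P) with h1 | h1
  · have hxk : x = k1 := min_eq_left h1
    rcases le_total k2 ((Y - x * P) / Q) with h2 | h2
    · have hyk : y = k2 := min_eq_left h2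
      rw [hxk, hyk]; linarith
    · have hyk : y = (Y - x * P) / Q := min_eq_right h2
      have hw : y * Q = Y - k1 * P := by rw [hyk, hxk]; field_simp
      rw [hxk]
      nlinarith [mul_nonneg (sub_nonneg.2 hu) (sub_nonneg.2 hPQ)]
  · have hxk : x = Y / P := min_eq_right h1
    have hyk : y = 0 := by
      have h : (Y - x * P) / Q = 0 := by rw [hxk]; field_simp; ring
      rw [hy, h, min_eq_right hk2]
    rw [hxk, hyk]
    have h : min a k1 + min b k2 ≤ Y / P := by
      rw [le_div_iff₀ hP]; nlinarith
    linarith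

/-- Existence of a Nash equilibrium when both prices are positive. -/
theorem exists_nashEq (Y1 Y2 q1 q2 ρ p1 p2 : ℝ)
    (hY1 : 0 < Y1) (hY2 : 0 < Y2) (hq1 : 0 < q1) (hq2 : 0 < q2) (hρ : 0 < ρ)
    (hp1 : 0 < p1) (hp2 : 0 < p2) :
    ∃ a0 b0 c0 d0 : ℝ, NashEq Y1 Y2 q1 q2 p1 p2 ρ a0 b0 c0 d0 := by
  have hp1' : 0 < p1 + ρ := by linarith
  have hp2' : 0 < p2 + ρ := by linarith
  rcases le_total p2 (p1 + ρ) with hB | hB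
  · -- consumer II buys good 2 first; d0 independent of a0
    set d0 := min q2 (Y2 / p2) with hd0def
    rcases le_total p1 (p2 + ρ) with hA | hA
    · -- consumer I buys good 1 first
      obtain ⟨a0, b0, ha0, hb0, ha0q, hb0c, hbud1, _, opt1⟩ :=
        greedy p1 (p2 + ρ) Y1 q1 (max 0 (q2 - d0)) hp1 hp2' hA hY1.le hq1.le (le_max_left _ _)
      obtain ⟨x, y, hx0, hy0, hxq, hyc, hbud2, hxeq, opt2⟩ :=
        greedy p2 (p1 + ρ) Y2 q2 (max 0 (q1 - a0)) hp2 hp1' hB hY2.le hq2.le (le_max_left _ _)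
      have hxd : x = d0 := hxeq
      refine ⟨a0, b0, y, x, ⟨ha0, hb0, hbud1⟩, ⟨hy0, hx0, by linarith⟩, ?_, ?_⟩
      · intro a b hS
        obtain ⟨ha, hb, hab⟩ := hS
        show min a q1 + min b (max 0 (q2 - x)) ≤ min a0 q1 + min b0 (max 0 (q2 - x))
        rw [hxd, min_eq_left ha0q, min_eq_left hb0c]
        exact opt1 a b ha hb hab
      · intro c d hS
        obtain ⟨hc, hd, hcd⟩ := hS
        show min d q2 + min c (max 0 (q1 - a0)) ≤ min x q2 + min y (max 0 (q1 - a0))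
        rw [min_eq_left hxq, min_eq_left hyc]
        exact opt2 d c hd hc (by linarith)
    · -- consumer I buys good 2 first
      obtain ⟨b0, a0, hb0, ha0, hb0c, ha0q, hbud1, _, opt1⟩ :=
        greedy (p2 + ρ) p1 Y1 (max 0 (q2 - d0)) q1 hp2' hp1 hA hY1.le (le_max_left _ _) hq1.le
      obtain ⟨x, y, hx0, hy0, hxq, hyc, hbud2, hxeq, opt2⟩ :=
        greedy p2 (p1 + ρ) Y2 q2 (max 0 (q1 - a0)) hp2 hp1' hB hY2.le hq2.le (le_max_left _ _)
      have hxd : x = d0 := hxeq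
      refine ⟨a0, b0, y, x, ⟨ha0, hb0, by linarith⟩, ⟨hy0, hx0, by linarith⟩, ?_, ?_⟩
      · intro a b hS
        obtain ⟨ha, hb, hab⟩ := hS
        show min a q1 + min b (max 0 (q2 - x)) ≤ min a0 q1 + min b0 (max 0 (q2 - x))
        rw [hxd, min_eq_left ha0q, min_eq_left hb0c]
        have := opt1 b a hb ha (by linarith)
        linarith
      · intro c d hS
        obtain ⟨hc, hd, hcd⟩ := hS
        show min d q2 + min c (max 0 (q1 - a0)) ≤ min x q2 + min y (max 0 (q1 - a0))
        rw [min_eq_left hxq, min_eq_left hyc]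
        exact opt2 d c hd hc (by linarith)
  · -- consumer II buys good 1 first; consumer I buys good 1 first (p1 ≤ p2+ρ)
    set a0 := min q1 (Y1 / p1) with ha0def
    have hA : p1 ≤ p2 + ρ := by linarith
    obtain ⟨c0, d0, hc0, hd0, hc0c, hd0q, hbud2, _, opt2⟩ :=
      greedy (p1 + ρ) p2 Y2 (max 0 (q1 - a0)) q2 hp1' hp2 hB hY2.le (le_max_left _ _) hq2.le
    obtain ⟨x, y, hx0, hy0, hxq, hyc, hbud1, hxeq, opt1⟩ :=
      greedy p1 (p2 + ρ) Y1 q1 (max 0 (q2 - d0)) hp1 hp2' hA hY1.le hq1.le (le_max_left _ _)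
    have hxa : x = a0 := hxeq
    refine ⟨x, y, c0, d0, ⟨hx0, hy0, hbud1⟩, ⟨hc0, hd0, hbud2⟩, ?_, ?_⟩
    · intro a b hS
      obtain ⟨ha, hb, hab⟩ := hS
      show min a q1 + min b (max 0 (q2 - d0)) ≤ min x q1 + min y (max 0 (q2 - d0))
      rw [min_eq_left hxq, min_eq_left hyc]
      exact opt1 a b ha hb hab
    · intro c d hS
      obtain ⟨hc, hd, hcd⟩ := hS
      show min d q2 + min c (max 0 (q1 - x)) ≤ min d0 q2 + min c0 (max 0 (q1 - x))
      rw [hxa, min_eq_left hd0q, min_eq_left hc0c]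
      have := opt2 c d hc hd hcd
      linarith
end
end

section
/- (Lemma 2.1) Assume p₁ > 0 and p₂ > 0, and let (α₀, β₀, γ₀, δ₀) be an expenditure-minimal Nash equilibrium. Then α₀ ≤ q₁, δ₀ ≤ q₂, and moreover α₀ + γ₀ ≤ q₁ and β₀ + δ₀ ≤ q₂. -/
open Filter

noncomputable section

/-- Lemma 2.1: at an expenditure-minimal Nash equilibrium, `α₀ ≤ q₁`, `δ₀ ≤ q₂`,
`α₀ + γ₀ ≤ q₁` and `β₀ + δ₀ ≤ q₂`. -/
theorem lemma_2_1 (Y1 Y2 q1 q2 ρ p1 p2 a0 b0 c0 d0 : ℝ)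
    (hY1 : 0 < Y1) (hY2 : 0 < Y2) (hq1 : 0 < q1) (hq2 : 0 < q2) (hρ : 0 < ρ)
    (hp1 : 0 < p1) (hp2 : 0 < p2)
    (hNE : ExpMinNE Y1 Y2 q1 q2 p1 p2 ρ a0 b0 c0 d0) :
    a0 ≤ q1 ∧ d0 ≤ q2 ∧ a0 + c0 ≤ q1 ∧ b0 + d0 ≤ q2 := by
  obtain ⟨⟨⟨ha0, hb0, hbud1⟩, ⟨hc0, hd0, hbud2⟩, _, _⟩, hSR1, hSR2⟩ := hNE
  have h1 : a0 ≤ q1 := by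
    by_contra h
    push_neg at h
    have hS : S1 Y1 p1 p2 ρ q1 b0 := ⟨hq1.le, hb0, by nlinarith⟩
    have hP : P1 q1 q2 q1 b0 c0 d0 = P1 q1 q2 a0 b0 c0 d0 := by
      unfold P1; rw [min_self, min_eq_right h.le]
    have := hSR1 q1 b0 hS hP
    nlinarith
  have h2 : d0 ≤ q2 := by
    by_contra h
    push_neg at h
    have hS : S2 Y2 p1 p2 ρ c0 q2 := ⟨hc0, hq2.le, by nlinarith⟩
    have hP : P2 q1 q2 a0 b0 c0 q2 = P2 q1 q2 a0 b0 c0 d0 := by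
      unfold P2; rw [min_self, min_eq_right h.le]
    have := hSR2 c0 q2 hS hP
    nlinarith
  have h3 : a0 + c0 ≤ q1 := by
    by_contra h
    push_neg at h
    have hx : max 0 (q1 - a0) = q1 - a0 := max_eq_right (by linarith)
    have hS : S2 Y2 p1 p2 ρ (q1 - a0) d0 := ⟨by linarith, hd0, by nlinarith⟩
    have hP : P2 q1 q2 a0 b0 (q1 - a0) d0 = P2 q1 q2 a0 b0 c0 d0 := by
      unfold P2
      rw [hx, min_self, min_eq_right (by linarith : q1 - a0 ≤ c0)]
    have := hSR2 _ _ hS hP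
    nlinarith
  have h4 : b0 + d0 ≤ q2 := by
    by_contra h
    push_neg at h
    have hx : max 0 (q2 - d0) = q2 - d0 := max_eq_right (by linarith)
    have hS : S1 Y1 p1 p2 ρ a0 (q2 - d0) := ⟨ha0, by linarith, by nlinarith⟩
    have hP : P1 q1 q2 a0 (q2 - d0) c0 d0 = P1 q1 q2 a0 b0 c0 d0 := by
      unfold P1
      rw [hx, min_self, min_eq_right (by linarith : q2 - d0 ≤ b0)]
    have := hSR1 _ _ hS hP
    nlinarith
  exact ⟨h1, h2, h3, h4⟩
end
end

section
/- (Lemma 2.2) Assume p₁ > 0 and p₂ > 0, and let (α₀, β₀, γ₀, δ₀) be a Nash equilibrium. Then it is impossible that simultaneously α₀ + γ₀ < q₁ and Y₁ − p₂'·β₀ > p₁·q₁; likewise it is impossible that simultaneously β₀ + δ₀ < q₂ and Y₂ − p₁'·γ₀ > p₂·q₂. (Here q₁^cons = α₀ + γ₀ and q₂^cons = β₀ + δ₀ are total consumptions and Y₁^res = Y₁ − p₂'·β₀, Y₂^res = Y₂ − p₁'·γ₀ are residual incomes.) -/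
open Filter

noncomputable section

/-- Lemma 2.2: at a Nash equilibrium it is impossible to simultaneously have
unconsumed local supply and residual income exceeding the value of local supply. -/
theorem lemma_2_2 (Y1 Y2 q1 q2 ρ p1 p2 a0 b0 c0 d0 : ℝ)
    (hY1 : 0 < Y1) (hY2 : 0 < Y2) (hq1 : 0 < q1) (hq2 : 0 < q2) (hρ : 0 < ρ)
    (hp1 : 0 < p1) (hp2 : 0 < p2)
    (hNE : NashEq Y1 Y2 q1 q2 p1 p2 ρ a0 b0 c0 d0) :
    ¬(a0 + c0 < q1 ∧ Y1 - (p2 + ρ) * b0 > p1 * q1) ∧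
    ¬(b0 + d0 < q2 ∧ Y2 - (p1 + ρ) * c0 > p2 * q2) := by
  obtain ⟨⟨ha0, hb0, hS1⟩, ⟨hc0, hd0, hS2⟩, hB1, hB2⟩ := hNE
  constructor
  · rintro ⟨hlt, hres⟩
    have ha0q1 : a0 < q1 := lt_of_le_of_lt (le_add_of_nonneg_right hc0) hlt
    have hmem : S1 Y1 p1 p2 ρ q1 b0 := ⟨hq1.le, hb0, by nlinarith⟩
    have := hB1 q1 b0 hmem
    simp only [P1, min_self] at this
    have h1 : min a0 q1 = a0 := min_eq_left ha0q1.le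
    rw [h1] at this
    linarith
  · rintro ⟨hlt, hres⟩
    have hd0q2 : d0 < q2 := lt_of_le_of_lt (le_add_of_nonneg_left hb0) hlt
    have hmem : S2 Y2 p1 p2 ρ c0 q2 := ⟨hc0, hq2.le, by nlinarith⟩
    have := hB2 c0 q2 hmem
    simp only [P2, min_self] at this
    have h1 : min d0 q2 = d0 := min_eq_left hd0q2.le
    rw [h1] at this
    linarith
end
end

section
/- (Corollary 2.3) Assume p₁ > 0 and p₂ > 0, and let (α₀, β₀, γ₀, δ₀) be an expenditure-minimal Nash equilibrium. Then exactly one of the following holds: (i) α₀ = q₁ (in which case Y₁ − p₂'·β₀ − p₁·q₁ = Y₁ − (p₁·α₀ + p₂'·β₀)); or (ii) α₀ < q₁ and the budget is exhausted: p₁·α₀ + p₂'·β₀ = Y₁. The analogous dichotomy holds for consumer II: either δ₀ = q₂, or δ₀ < q₂ and γ₀·p₁' + δ₀·p₂ = Y₂. -/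
open Filter

noncomputable section

/-- Corollary 2.3: at an expenditure-minimal Nash equilibrium, for each consumer
exactly one of the following holds: the priority order equals local supply, or it
is smaller and the budget is exhausted. -/
theorem corollary_2_3 (Y1 Y2 q1 q2 ρ p1 p2 a0 b0 c0 d0 : ℝ)
    (hY1 : 0 < Y1) (hY2 : 0 < Y2) (hq1 : 0 < q1) (hq2 : 0 < q2) (hρ : 0 < ρ)
    (hp1 : 0 < p1) (hp2 : 0 < p2)
    (hNE : ExpMinNE Y1 Y2 q1 q2 p1 p2 ρ a0 b0 c0 d0) :
    ((a0 = q1 ∧ Y1 - (p2 + ρ) * b0 - p1 * q1 = Y1 - (p1 * a0 + (p2 + ρ) * b0)) ∨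
      (a0 < q1 ∧ p1 * a0 + (p2 + ρ) * b0 = Y1)) ∧
    (d0 = q2 ∨ (d0 < q2 ∧ c0 * (p1 + ρ) + d0 * p2 = Y2)) := by
  obtain ⟨⟨⟨ha0, hb0, hbud1⟩, ⟨hc0, hd0, hbud2⟩, hbest1, hbest2⟩, hmin1, hmin2⟩ := hNE
  have hp2' : (0:ℝ) < p2 + ρ := by linarith
  have haq : a0 ≤ q1 := by
    by_contra h
    push_neg at h
    have hS : S1 Y1 p1 p2 ρ q1 b0 := ⟨hq1.le, hb0, by nlinarith⟩
    have hP : P1 q1 q2 q1 b0 c0 d0 = P1 q1 q2 a0 b0 c0 d0 := by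
      unfold P1
      rw [min_self, min_eq_right h.le]
    have := hmin1 q1 b0 hS hP
    nlinarith
  have hdq : d0 ≤ q2 := by
    by_contra h
    push_neg at h
    have hS : S2 Y2 p1 p2 ρ c0 q2 := ⟨hc0, hq2.le, by nlinarith⟩
    have hP : P2 q1 q2 a0 b0 c0 q2 = P2 q1 q2 a0 b0 c0 d0 := by
      unfold P2
      rw [min_self, min_eq_right h.le]
    have := hmin2 c0 q2 hS hP
    nlinarith
  constructor
  · rcases eq_or_lt_of_le haq with h | h
    · exact Or.inl ⟨h, by rw [h]; ring⟩
    · refine Or.inr ⟨h, ?_⟩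
      by_contra hne
      have hlt : p1 * a0 + (p2 + ρ) * b0 < Y1 := lt_of_le_of_ne (by linarith) hne
      set ε := min (q1 - a0) ((Y1 - (p1 * a0 + (p2 + ρ) * b0)) / p1) with hεdef
      have hεpos : 0 < ε := lt_min (by linarith) (div_pos (by linarith) (by linarith))
      have hε1 : ε ≤ q1 - a0 := min_le_left _ _
      have hε2 : ε ≤ (Y1 - (p1 * a0 + (p2 + ρ) * b0)) / p1 := min_le_right _ _
      have hε2' : ε * p1 ≤ Y1 - (p1 * a0 + (p2 + ρ) * b0) := by
        rw [← le_div_iff₀ hp1]; exact hε2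
      have hS : S1 Y1 p1 p2 ρ (a0 + ε) b0 := ⟨by linarith, hb0, by nlinarith⟩
      have hcon := hbest1 (a0 + ε) b0 hS
      unfold P1 at hcon
      rw [min_eq_left (by linarith : a0 + ε ≤ q1), min_eq_left h.le] at hcon
      linarith
  · rcases eq_or_lt_of_le hdq with h | h
    · exact Or.inl h
    · refine Or.inr ⟨h, ?_⟩
      by_contra hne
      have hlt : c0 * (p1 + ρ) + d0 * p2 < Y2 := lt_of_le_of_ne hbud2 hne
      set ε := min (q2 - d0) ((Y2 - (c0 * (p1 + ρ) + d0 * p2)) / p2) with hεdef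
      have hεpos : 0 < ε := lt_min (by linarith) (div_pos (by linarith) (by linarith))
      have hε1 : ε ≤ q2 - d0 := min_le_left _ _
      have hε2 : ε ≤ (Y2 - (c0 * (p1 + ρ) + d0 * p2)) / p2 := min_le_right _ _
      have hε2' : ε * p2 ≤ Y2 - (c0 * (p1 + ρ) + d0 * p2) := by
        rw [← le_div_iff₀ hp2]; exact hε2
      have hS : S2 Y2 p1 p2 ρ c0 (d0 + ε) := ⟨hc0, by linarith, by nlinarith⟩
      have hcon := hbest2 c0 (d0 + ε) hS
      unfold P2 at hcon
      rw [min_eq_left (by linarith : d0 + ε ≤ q2), min_eq_left h.le] at hcon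
      linarith
end
end

section
/- (Proposition 1, zone III) Assume p₁ > 0, p₂ > 0, Y₁ ≥ p₁·q₁ and Y₂ ≥ p₂·q₂. Then the quadruple (α₀, β₀, γ₀, δ₀) = (q₁, 0, 0, q₂) is an expenditure-minimal Nash equilibrium, and every expenditure-minimal Nash equilibrium equals (q₁, 0, 0, q₂). -/
open Filter

noncomputable section

/-- Proposition 1 (zone III): if `Y₁ ≥ p₁q₁` and `Y₂ ≥ p₂q₂`, then `(q₁,0,0,q₂)`
is the unique expenditure-minimal Nash equilibrium. -/
theorem zoneIII_nash (Y1 Y2 q1 q2 ρ p1 p2 : ℝ)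
    (hY1 : 0 < Y1) (hY2 : 0 < Y2) (hq1 : 0 < q1) (hq2 : 0 < q2) (hρ : 0 < ρ)
    (hp1 : 0 < p1) (hp2 : 0 < p2)
    (h1 : p1 * q1 ≤ Y1) (h2 : p2 * q2 ≤ Y2) :
    ExpMinNE Y1 Y2 q1 q2 p1 p2 ρ q1 0 0 q2 ∧
    (∀ a0 b0 c0 d0 : ℝ, ExpMinNE Y1 Y2 q1 q2 p1 p2 ρ a0 b0 c0 d0 →
      a0 = q1 ∧ b0 = 0 ∧ c0 = 0 ∧ d0 = q2) := by
  have hp2ρ : (0:ℝ) < p2 + ρ := by linarith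
  have hp1ρ : (0:ℝ) < p1 + ρ := by linarith
  have hS1q : S1 Y1 p1 p2 ρ q1 0 := ⟨hq1.le, le_refl 0, by nlinarith⟩
  have hS2q : S2 Y2 p1 p2 ρ 0 q2 := ⟨le_refl 0, hq2.le, by nlinarith⟩
  constructor
  · refine ⟨⟨hS1q, hS2q, ?_, ?_⟩, ?_, ?_⟩
    · rintro a b ⟨ha, hb, hab⟩
      simp only [P1, sub_self, max_self, min_self]
      have h3 : min a q1 ≤ q1 := min_le_right _ _
      have h4 : min b (0:ℝ) ≤ 0 := min_le_right _ _
      linarith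
    · rintro c d ⟨hc, hd, hcd⟩
      simp only [P2, sub_self, max_self, min_self]
      have h3 : min d q2 ≤ q2 := min_le_right _ _
      have h4 : min c (0:ℝ) ≤ 0 := min_le_right _ _
      linarith
    · rintro a b ⟨ha, hb, hab⟩ heq
      simp only [P1, sub_self, max_self, min_self] at heq
      have h4 : min b (0:ℝ) = 0 := min_eq_right hb
      have h5 : min a q1 = q1 := by linarith [heq, h4]
      have h6 : q1 ≤ a := by
        rcases le_total a q1 with h | h
        · rw [min_eq_left h] at h5; linarith
        · exact h
      have h7 : 0 ≤ b * (p2 + ρ) := mul_nonneg hb hp2ρ.le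
      nlinarith
    · rintro c d ⟨hc, hd, hcd⟩ heq
      simp only [P2, sub_self, max_self, min_self] at heq
      have h4 : min c (0:ℝ) = 0 := min_eq_right hc
      have h5 : min d q2 = q2 := by linarith [heq, h4]
      have h6 : q2 ≤ d := by
        rcases le_total d q2 with h | h
        · rw [min_eq_left h] at h5; linarith
        · exact h
      have h7 : 0 ≤ c * (p1 + ρ) := mul_nonneg hc hp1ρ.le
      nlinarith
  · rintro a0 b0 c0 d0 ⟨⟨⟨ha0, hb0, hbud1⟩, ⟨hc0, hd0, hbud2⟩, hN1, hN2⟩, hE1, hE2⟩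
    have hM : (0:ℝ) ≤ max 0 (q2 - d0) := le_max_left _ _
    have hN : (0:ℝ) ≤ max 0 (q1 - a0) := le_max_left _ _
    have key1 : q1 ≤ min a0 q1 + min b0 (max 0 (q2 - d0)) := by
      have h := hN1 q1 0 hS1q
      simp only [P1, min_self] at h
      have h0 : min (0:ℝ) (max 0 (q2 - d0)) = 0 := min_eq_left hM
      linarith
    have key2 : q2 ≤ min d0 q2 + min c0 (max 0 (q1 - a0)) := by
      have h := hN2 0 q2 hS2q
      simp only [P2, min_self] at h
      have h0 : min (0:ℝ) (max 0 (q1 - a0)) = 0 := min_eq_left hN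
      linarith
    have himp1 : a0 < q1 → d0 < q2 := by
      intro h
      have hma : min a0 q1 = a0 := min_eq_left h.le
      have hbM : q1 - a0 ≤ min b0 (max 0 (q2 - d0)) := by linarith
      have hMpos : 0 < max 0 (q2 - d0) :=
        lt_of_lt_of_le (by linarith) (hbM.trans (min_le_right _ _))
      by_contra hd
      push_neg at hd
      rw [max_eq_left (by linarith : q2 - d0 ≤ 0)] at hMpos
      linarith
    have himp2 : d0 < q2 → a0 < q1 := by
      intro h
      have hmd : min d0 q2 = d0 := min_eq_left h.le
      have hcN : q2 - d0 ≤ min c0 (max 0 (q1 - a0)) := by linarith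
      have hNpos : 0 < max 0 (q1 - a0) :=
        lt_of_lt_of_le (by linarith) (hcN.trans (min_le_right _ _))
      by_contra ha
      push_neg at ha
      rw [max_eq_left (by linarith : q1 - a0 ≤ 0)] at hNpos
      linarith
    have hA : q1 ≤ a0 ∧ q2 ≤ d0 := by
      by_contra hcon
      have hboth : a0 < q1 ∧ d0 < q2 := by
        rcases lt_or_ge a0 q1 with h | h
        · exact ⟨h, himp1 h⟩
        · rcases lt_or_ge d0 q2 with h' | h'
          · exact ⟨himp2 h', h'⟩
          · exact absurd ⟨h, h'⟩ hcon
      obtain ⟨ha, hd⟩ := hboth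
      have hMax : max 0 (q2 - d0) = q2 - d0 := max_eq_right (by linarith)
      have hNax : max 0 (q1 - a0) = q1 - a0 := max_eq_right (by linarith)
      rw [hMax, min_eq_left ha.le] at key1
      rw [hNax, min_eq_left hd.le] at key2
      -- key1 : q1 ≤ a0 + min b0 (q2 - d0), key2 : q2 ≤ d0 + min c0 (q1 - a0)
      have t1 : q1 - a0 ≤ q2 - d0 := by linarith [min_le_right b0 (q2 - d0)]
      have t2 : q2 - d0 ≤ q1 - a0 := by linarith [min_le_right c0 (q1 - a0)]
      have hbge : q1 - a0 ≤ b0 := by linarith [min_le_left b0 (q2 - d0)]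
      have hcge : q2 - d0 ≤ c0 := by linarith [min_le_left c0 (q1 - a0)]
      have hmb : min b0 (q2 - d0) = q2 - d0 :=
        le_antisymm (min_le_right _ _) (by linarith)
      have hmc : min c0 (q1 - a0) = q1 - a0 :=
        le_antisymm (min_le_right _ _) (by linarith)
      have heq1 : P1 q1 q2 q1 0 c0 d0 = P1 q1 q2 a0 b0 c0 d0 := by
        simp only [P1, min_self, hMax, hmb, min_eq_left ha.le,
          min_eq_left (by linarith : (0:ℝ) ≤ q2 - d0)]
        linarith
      have heq2 : P2 q1 q2 a0 b0 0 q2 = P2 q1 q2 a0 b0 c0 d0 := by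
        simp only [P2, min_self, hNax, hmc, min_eq_left hd.le,
          min_eq_left (by linarith : (0:ℝ) ≤ q1 - a0)]
        linarith
      have hEa := hE1 q1 0 hS1q heq1
      have hEb := hE2 0 q2 hS2q heq2
      -- hEa : a0*p1 + b0*(p2+ρ) ≤ q1*p1 + 0*(p2+ρ)
      have hpa : p2 + ρ ≤ p1 := by nlinarith
      have hpb : p1 + ρ ≤ p2 := by nlinarith
      linarith
    obtain ⟨haq, hdq⟩ := hA
    have hMax : max 0 (q2 - d0) = 0 := max_eq_left (by linarith)
    have hNax : max 0 (q1 - a0) = 0 := max_eq_left (by linarith)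
    have heq1 : P1 q1 q2 q1 0 c0 d0 = P1 q1 q2 a0 b0 c0 d0 := by
      simp only [P1, hMax, min_self, min_eq_right haq, min_eq_right hb0]
    have heq2 : P2 q1 q2 a0 b0 0 q2 = P2 q1 q2 a0 b0 c0 d0 := by
      simp only [P2, hNax, min_self, min_eq_right hdq, min_eq_right hc0]
    have hEa := hE1 q1 0 hS1q heq1
    have hEb := hE2 0 q2 hS2q heq2
    have hb0' : 0 ≤ b0 * (p2 + ρ) := mul_nonneg hb0 hp2ρ.le
    have hc0' : 0 ≤ c0 * (p1 + ρ) := mul_nonneg hc0 hp1ρ.le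
    have hae : a0 = q1 := by
      refine le_antisymm ?_ haq
      have h : a0 * p1 ≤ q1 * p1 := by linarith
      exact le_of_mul_le_mul_right h hp1
    have hde : d0 = q2 := by
      refine le_antisymm ?_ hdq
      have h : d0 * p2 ≤ q2 * p2 := by linarith
      exact le_of_mul_le_mul_right h hp2
    subst hae hde
    refine ⟨rfl, ?_, ?_, rfl⟩
    · refine le_antisymm ?_ hb0
      have h : b0 * (p2 + ρ) ≤ 0 * (p2 + ρ) := by linarith
      exact le_of_mul_le_mul_right h hp2ρ
    · refine le_antisymm ?_ hc0
      have h : c0 * (p1 + ρ) ≤ 0 * (p1 + ρ) := by linarith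
      exact le_of_mul_le_mul_right h hp1ρ
end
end

section
/- (Proposition 2a, zone II-3) Assume p₁ > 0, p₂ > 0, Y₁ < p₁·q₁, p₂·q₂ < Y₂, and p₁'·(q₁ − Y₁/p₁) + p₂·q₂ ≤ Y₂ (the point (Y₁, Y₂) lies on or above the line ℓ₄). Then the quadruple (Y₁/p₁, 0, q₁ − Y₁/p₁, q₂) is an expenditure-minimal Nash equilibrium, and every expenditure-minimal Nash equilibrium equals it. At this equilibrium both supplies q₁, q₂ and the income Y₁ are fully depleted. -/
open Filter

noncomputable section

set_option maxHeartbeats 1000000 in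
/-- Proposition 2a (zone II-3): the quadruple `(Y₁/p₁, 0, q₁ − Y₁/p₁, q₂)` is the
unique expenditure-minimal Nash equilibrium, and at it both supplies and the
income `Y₁` are fully depleted. -/
theorem zoneII3_nash (Y1 Y2 q1 q2 ρ p1 p2 : ℝ)
    (hY1 : 0 < Y1) (hY2 : 0 < Y2) (hq1 : 0 < q1) (hq2 : 0 < q2) (hρ : 0 < ρ)
    (hp1 : 0 < p1) (hp2 : 0 < p2)
    (h1 : Y1 < p1 * q1) (h2 : p2 * q2 < Y2)
    (hl4 : (p1 + ρ) * (q1 - Y1 / p1) + p2 * q2 ≤ Y2) :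
    ExpMinNE Y1 Y2 q1 q2 p1 p2 ρ (Y1 / p1) 0 (q1 - Y1 / p1) q2 ∧
    (∀ a0 b0 c0 d0 : ℝ, ExpMinNE Y1 Y2 q1 q2 p1 p2 ρ a0 b0 c0 d0 →
      a0 = Y1 / p1 ∧ b0 = 0 ∧ c0 = q1 - Y1 / p1 ∧ d0 = q2) ∧
    (Y1 / p1 + (q1 - Y1 / p1) = q1 ∧ (0 : ℝ) + q2 = q2 ∧
      p1 * (Y1 / p1) + (p2 + ρ) * 0 = Y1) := by
  have hp1' : p1 ≠ 0 := ne_of_gt hp1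
  have hp2' : (0:ℝ) < p2 + ρ := by linarith
  have hp1r : (0:ℝ) < p1 + ρ := by linarith
  set A := Y1 / p1 with hAdef
  have hA : A * p1 = Y1 := div_mul_cancel₀ _ hp1'
  have hApos : 0 < A := div_pos hY1 hp1
  have hAq : A < q1 := by
    rw [hAdef, div_lt_iff₀ hp1]; nlinarith
  have hm0 : (0:ℝ) ≤ q1 - A := by linarith
  have hl4' : (q1 - A) * (p1 + ρ) + q2 * p2 ≤ Y2 := by nlinarith [hl4]
  refine ⟨?_, ?_, ?_⟩
  · -- existence of the expenditure-minimal NE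
    refine ⟨⟨⟨hApos.le, le_refl 0, by rw [zero_mul, add_zero, hA]⟩,
      ⟨hm0, hq2.le, hl4'⟩, ?_, ?_⟩, ?_, ?_⟩
    · -- consumer I best response
      intro a b hab
      obtain ⟨ha, hb, hbud⟩ := hab
      have haA : a ≤ A := by
        have hb' : 0 ≤ b * (p2 + ρ) := mul_nonneg hb hp2'.le
        have : a * p1 ≤ A * p1 := by rw [hA]; linarith
        exact le_of_mul_le_mul_right this hp1
      simp only [P1, sub_self, max_self, min_eq_right hb, min_eq_left (le_of_lt hAq),
        min_eq_left (le_trans haA hAq.le), min_eq_right (le_refl (0:ℝ))]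
      linarith
    · -- consumer II best response
      intro c d hcd
      have hmax : max 0 (q1 - A) = q1 - A := max_eq_right hm0
      simp only [P2, hmax, min_self, min_eq_left (le_refl (q1 - A))]
      have h1' : min d q2 ≤ q2 := min_le_right _ _
      have h2' : min c (q1 - A) ≤ q1 - A := min_le_right _ _
      linarith
    · -- expenditure minimality for I
      intro a b hab heq
      obtain ⟨ha, hb, hbud⟩ := hab
      have haA : a ≤ A := by
        have hb' : 0 ≤ b * (p2 + ρ) := mul_nonneg hb hp2'.le
        have : a * p1 ≤ A * p1 := by rw [hA]; linarith
        exact le_of_mul_le_mul_right this hp1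
      simp only [P1, sub_self, max_self, min_eq_right hb, min_eq_left (le_of_lt hAq),
        min_eq_left (le_trans haA hAq.le), min_eq_right (le_refl (0:ℝ)), add_zero] at heq
      rw [heq]
      have hb' : 0 ≤ b * (p2 + ρ) := mul_nonneg hb hp2'.le
      linarith
    · -- expenditure minimality for II
      intro c d hcd heq
      obtain ⟨hc, hd, hbud⟩ := hcd
      have hmax : max 0 (q1 - A) = q1 - A := max_eq_right hm0
      simp only [P2, hmax, min_self, min_eq_left (le_refl (q1 - A))] at heq
      have h1' : min d q2 ≤ q2 := min_le_right _ _
      have h2' : min c (q1 - A) ≤ q1 - A := min_le_right _ _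
      have hdq : min d q2 = q2 := by linarith
      have hcm : min c (q1 - A) = q1 - A := by linarith
      have hdq2 : q2 ≤ d := by
        by_contra h; push_neg at h
        rw [min_eq_left h.le] at hdq; linarith
      have hcm2 : q1 - A ≤ c := by
        by_contra h; push_neg at h
        rw [min_eq_left h.le] at hcm; linarith
      have := mul_le_mul_of_nonneg_right hdq2 hp2.le
      have := mul_le_mul_of_nonneg_right hcm2 hp1r.le
      linarith
  · -- uniqueness
    intro a0 b0 c0 d0 hEM
    obtain ⟨⟨⟨ha0, hb0, hbud1⟩, ⟨hc0, hd0, hbud2⟩, hBR1, hBR2⟩, hEM1, hEM2⟩ := hEM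
    have ha0A : a0 ≤ A := by
      have hb' : 0 ≤ b0 * (p2 + ρ) := mul_nonneg hb0 hp2'.le
      have : a0 * p1 ≤ A * p1 := by rw [hA]; linarith
      exact le_of_mul_le_mul_right this hp1
    have ha0q1 : a0 < q1 := lt_of_le_of_lt ha0A hAq
    have hmaxa : max 0 (q1 - a0) = q1 - a0 := max_eq_right (by linarith)
    have hr0 : (0:ℝ) ≤ max 0 (q2 - d0) := le_max_left _ _
    set r0 := max 0 (q2 - d0) with hr0def
    -- budget of consumer I is tight
    have hbt1 : a0 * p1 + b0 * (p2 + ρ) = Y1 := by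
      by_contra h
      have hlt : a0 * p1 + b0 * (p2 + ρ) < Y1 := lt_of_le_of_ne hbud1 h
      set ε := (Y1 - (a0 * p1 + b0 * (p2 + ρ))) / p1 with hεdef
      have hε : 0 < ε := div_pos (by linarith) hp1
      have hεp : ε * p1 = Y1 - (a0 * p1 + b0 * (p2 + ρ)) := div_mul_cancel₀ _ hp1'
      have hS : S1 Y1 p1 p2 ρ (a0 + ε) b0 :=
        ⟨by linarith, hb0, by rw [add_mul]; linarith⟩
      have hle := hBR1 (a0 + ε) b0 hS
      have haA' : a0 + ε ≤ A := by
        have h22 := hS.2.2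
        have hb' : 0 ≤ b0 * (p2 + ρ) := mul_nonneg hb0 hp2'.le
        have : (a0 + ε) * p1 ≤ A * p1 := by rw [hA]; linarith
        exact le_of_mul_le_mul_right this hp1
      simp only [P1, min_eq_left (le_trans haA' hAq.le), min_eq_left ha0q1.le] at hle
      linarith
    -- d0 ≤ q2
    have hd0le : d0 ≤ q2 := by
      by_contra h; push_neg at h
      have hS : S2 Y2 p1 p2 ρ c0 q2 := ⟨hc0, hq2.le, by
        have := mul_le_mul_of_nonneg_right h.le hp2.le; linarith⟩
      have heq : P2 q1 q2 a0 b0 c0 q2 = P2 q1 q2 a0 b0 c0 d0 := by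
        simp only [P2, min_self, min_eq_right h.le]
      have := hEM2 c0 q2 hS heq
      have := mul_lt_mul_of_pos_right h hp2
      linarith
    -- c0 ≤ q1 - a0
    have hc0le : c0 ≤ q1 - a0 := by
      by_contra h; push_neg at h
      have hS : S2 Y2 p1 p2 ρ (q1 - a0) d0 := ⟨by linarith, hd0, by
        have := mul_lt_mul_of_pos_right h hp1r; linarith⟩
      have heq : P2 q1 q2 a0 b0 (q1 - a0) d0 = P2 q1 q2 a0 b0 c0 d0 := by
        simp only [P2, hmaxa, min_self, min_eq_right h.le]
      have := hEM2 (q1 - a0) d0 hS heq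
      have := mul_lt_mul_of_pos_right h hp1r
      linarith
    -- b0 ≤ r0
    have hb0le : b0 ≤ r0 := by
      by_contra h; push_neg at h
      have hS : S1 Y1 p1 p2 ρ a0 r0 := ⟨ha0, hr0, by
        have := mul_lt_mul_of_pos_right h hp2'; linarith⟩
      have heq : P1 q1 q2 a0 r0 c0 d0 = P1 q1 q2 a0 b0 c0 d0 := by
        simp only [P1, ← hr0def, min_self, min_eq_right h.le]
      have := hEM1 a0 r0 hS heq
      have := mul_lt_mul_of_pos_right h hp2'
      linarith
    -- d0 = q2
    have hd0eq : d0 = q2 := by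
      by_contra hne
      have hd0lt : d0 < q2 := lt_of_le_of_ne hd0le hne
      have hr0eq : r0 = q2 - d0 := max_eq_right (by linarith)
      -- budget of consumer II is tight
      have hbt2 : c0 * (p1 + ρ) + d0 * p2 = Y2 := by
        by_contra h
        have hlt : c0 * (p1 + ρ) + d0 * p2 < Y2 := lt_of_le_of_ne hbud2 h
        set ε := min ((Y2 - (c0 * (p1 + ρ) + d0 * p2)) / p2) (q2 - d0) with hεdef
        have hε : 0 < ε := lt_min (div_pos (by linarith) hp2) (by linarith)
        have hε1 : ε * p2 ≤ Y2 - (c0 * (p1 + ρ) + d0 * p2) := by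
          have := min_le_left ((Y2 - (c0 * (p1 + ρ) + d0 * p2)) / p2) (q2 - d0)
          rw [← hεdef] at this
          calc ε * p2 ≤ ((Y2 - (c0 * (p1 + ρ) + d0 * p2)) / p2) * p2 :=
                mul_le_mul_of_nonneg_right this hp2.le
            _ = Y2 - (c0 * (p1 + ρ) + d0 * p2) := div_mul_cancel₀ _ (ne_of_gt hp2)
        have hε2 : ε ≤ q2 - d0 := min_le_right _ _
        have hS : S2 Y2 p1 p2 ρ c0 (d0 + ε) := ⟨hc0, by linarith, by
          have : (d0 + ε) * p2 = d0 * p2 + ε * p2 := by ring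
          linarith⟩
        have hle := hBR2 c0 (d0 + ε) hS
        simp only [P2, min_eq_left (by linarith : d0 + ε ≤ q2),
          min_eq_left hd0lt.le] at hle
        linarith
      rcases lt_or_ge p2 (p1 + ρ) with hcmp | hcmp
      · -- II strictly prefers commodity 2 : c0 = 0, contradiction
        have hc00 : c0 = 0 := by
          by_contra hc
          have hcpos : 0 < c0 := lt_of_le_of_ne hc0 (Ne.symm hc)
          obtain ⟨t, ht⟩ : ∃ t : ℝ, t = min (c0 / p2) ((q2 - d0) / (p1 + ρ)) :=
            ⟨_, rfl⟩
          have htpos : 0 < t := by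
            rw [ht]; exact lt_min (div_pos hcpos hp2) (div_pos (by linarith) hp1r)
          have ht1 : t * p2 ≤ c0 := by
            have h' : t ≤ c0 / p2 := ht ▸ min_le_left _ _
            rw [le_div_iff₀ hp2] at h'; exact h'
          have ht2 : t * (p1 + ρ) ≤ q2 - d0 := by
            have h' : t ≤ (q2 - d0) / (p1 + ρ) := ht ▸ min_le_right _ _
            rw [le_div_iff₀ hp1r] at h'; exact h'
          have htp2 : 0 < t * p2 := mul_pos htpos hp2
          have htp1 : 0 < t * (p1 + ρ) := mul_pos htpos hp1r
          have hS : S2 Y2 p1 p2 ρ (c0 - t * p2) (d0 + t * (p1 + ρ)) := by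
            refine ⟨by linarith, by linarith, ?_⟩
            have h' : (c0 - t * p2) * (p1 + ρ) + (d0 + t * (p1 + ρ)) * p2
                = c0 * (p1 + ρ) + d0 * p2 := by ring
            linarith
          have hle := hBR2 _ _ hS
          simp only [P2, hmaxa, min_eq_left (by linarith : d0 + t * (p1 + ρ) ≤ q2),
            min_eq_left hd0lt.le,
            min_eq_left (by linarith : c0 - t * p2 ≤ q1 - a0),
            min_eq_left hc0le] at hle
          nlinarith [mul_pos htpos (by linarith : (0:ℝ) < (p1 + ρ) - p2)]
        rw [hc00, zero_mul, zero_add] at hbt2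
        have := mul_lt_mul_of_pos_right hd0lt hp2
        linarith
      · -- p1 + ρ ≤ p2 : consumer I buys only commodity 1
        have hp1lt : p1 < p2 + ρ := by linarith
        have hSA : S1 Y1 p1 p2 ρ A 0 :=
          ⟨hApos.le, le_refl 0, by rw [zero_mul, add_zero, hA]⟩
        have hle := hBR1 A 0 hSA
        rw [show P1 q1 q2 A 0 c0 d0 = A from by
              simp [P1, ← hr0def, min_eq_left hAq.le, min_eq_left hr0],
            show P1 q1 q2 a0 b0 c0 d0 = a0 + b0 from by
              simp [P1, ← hr0def, min_eq_left ha0q1.le, min_eq_left hb0le]] at hle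
        -- hle : A ≤ a0 + b0
        have hb00 : b0 = 0 := by
          have h1'' := mul_le_mul_of_nonneg_right hle hp1.le
          have h2'' : b0 * p1 ≤ b0 * (p2 + ρ) :=
            mul_le_mul_of_nonneg_left (by linarith) hb0
          nlinarith
        have ha0A' : a0 = A := by
          apply mul_right_cancel₀ hp1'
          rw [hA]; rw [hb00, zero_mul, add_zero] at hbt1; exact hbt1
        rw [ha0A'] at hc0le
        have := mul_le_mul_of_nonneg_right hc0le hp1r.le
        have := mul_lt_mul_of_pos_right hd0lt hp2
        linarith
    -- conclude
    have hr0z : r0 = 0 := by rw [hr0def, hd0eq, sub_self, max_self]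
    have hb00 : b0 = 0 := le_antisymm (by rw [← hr0z]; exact hb0le) hb0
    have ha0A' : a0 = A := by
      apply mul_right_cancel₀ hp1'
      rw [hA]; rw [hb00, zero_mul, add_zero] at hbt1; exact hbt1
    refine ⟨ha0A', hb00, ?_, hd0eq⟩
    rw [ha0A'] at hc0le hmaxa
    have hS : S2 Y2 p1 p2 ρ (q1 - A) q2 := ⟨hm0, hq2.le, hl4'⟩
    have hle := hBR2 (q1 - A) q2 hS
    rw [hd0eq] at hle
    simp only [P2, ha0A', hmaxa, min_self, min_eq_left hc0le] at hle
    linarith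
  · refine ⟨by ring, by ring, ?_⟩
    rw [mul_zero, add_zero, mul_comm]
    exact hA
end
end

section
/- (Proposition 2b, zone II-2, type I) Assume p₁ > 0, p₂ > 0, p₁ + ρ < p₂ (i.e. Δp = p₁ − p₂ < −ρ), Y₁ < p₁·q₁, p₂·q₂ ≤ Y₂, Y₂ − p₁'·(q₁ − Y₁/p₁) < p₂·q₂ (strictly below ℓ₄), and Y₁/p₁ + Y₂/p₁' ≥ q₁ (on or above ℓ₁). Then the quadruple (Y₁/p₁, 0, q₁ − Y₁/p₁, (Y₂ − p₁'·(q₁ − Y₁/p₁))/p₂) is a Nash equilibrium. -/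
open Filter

noncomputable section

/-- Proposition 2b (zone II-2, type I, `Δp < −ρ`): the quadruple
`(Y₁/p₁, 0, q₁ − Y₁/p₁, (Y₂ − p₁'(q₁ − Y₁/p₁))/p₂)` is a Nash equilibrium. -/
theorem zoneII2_typeI_nash (Y1 Y2 q1 q2 ρ p1 p2 : ℝ)
    (hY1 : 0 < Y1) (hY2 : 0 < Y2) (hq1 : 0 < q1) (hq2 : 0 < q2) (hρ : 0 < ρ)
    (hp1 : 0 < p1) (hp2 : 0 < p2)
    (hΔ : p1 + ρ < p2)
    (h1 : Y1 < p1 * q1) (h2 : p2 * q2 ≤ Y2)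
    (hl4 : Y2 - (p1 + ρ) * (q1 - Y1 / p1) < p2 * q2)
    (hl1 : Y1 / p1 + Y2 / (p1 + ρ) ≥ q1) :
    NashEq Y1 Y2 q1 q2 p1 p2 ρ (Y1 / p1) 0 (q1 - Y1 / p1)
      ((Y2 - (p1 + ρ) * (q1 - Y1 / p1)) / p2) := by

  have hp1' : (0:ℝ) < p1 + ρ := by linarith
  have ha0q : Y1 / p1 < q1 := (div_lt_iff₀ hp1).mpr (by nlinarith)
  have ha0pos : 0 < Y1 / p1 := div_pos hY1 hp1
  have hc0pos : 0 < q1 - Y1 / p1 := by linarith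
  have hY2c : (p1 + ρ) * (q1 - Y1 / p1) ≤ Y2 := by
    have h := (le_div_iff₀ hp1').mpr (le_refl ((Y2 / (p1+ρ)) * (p1+ρ)))
    have : q1 - Y1 / p1 ≤ Y2 / (p1 + ρ) := by linarith
    nlinarith [div_mul_cancel₀ Y2 hp1'.ne']
  have hd0nn : 0 ≤ (Y2 - (p1 + ρ) * (q1 - Y1 / p1)) / p2 :=
    div_nonneg (by linarith) hp2.le
  have hd0p2 : ((Y2 - (p1 + ρ) * (q1 - Y1 / p1)) / p2) * p2
      = Y2 - (p1 + ρ) * (q1 - Y1 / p1) := div_mul_cancel₀ _ hp2.ne'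
  have hd0lt : (Y2 - (p1 + ρ) * (q1 - Y1 / p1)) / p2 < q2 :=
    (div_lt_iff₀ hp2).mpr (by nlinarith)
  set d0 := (Y2 - (p1 + ρ) * (q1 - Y1 / p1)) / p2 with hd0def
  refine ⟨⟨ha0pos.le, le_refl 0, by rw [div_mul_cancel₀ Y1 hp1.ne']; linarith⟩,
    ⟨hc0pos.le, hd0nn, by nlinarith⟩, ?_, ?_⟩
  · intro a b ⟨ha, hb, hab⟩
    have hab' : a + b ≤ Y1 / p1 := by
      rw [le_div_iff₀ hp1]; nlinarith
    have hP1eq : P1 q1 q2 (Y1/p1) 0 (q1 - Y1/p1) d0 = Y1 / p1 := by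
      unfold P1
      rw [min_eq_left ha0q.le, min_eq_left (le_max_left _ _), add_zero]
    rw [hP1eq]
    unfold P1
    calc min a q1 + min b (max 0 (q2 - d0)) ≤ a + b := by
          gcongr <;> [exact min_le_left _ _; exact min_le_left _ _]
      _ ≤ Y1 / p1 := hab'
  · intro c d ⟨hc, hd, hcd⟩
    have hmax : max 0 (q1 - Y1/p1) = q1 - Y1/p1 := max_eq_right hc0pos.le
    have hP2eq : P2 q1 q2 (Y1/p1) 0 (q1 - Y1/p1) d0 = d0 + (q1 - Y1/p1) := by
      unfold P2
      rw [hmax, min_eq_left hd0lt.le, min_self]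
    rw [hP2eq]
    unfold P2
    rw [hmax]
    have h1' : min d q2 ≤ d := min_le_left _ _
    have h2' : min c (q1 - Y1/p1) ≤ q1 - Y1/p1 := min_le_right _ _
    have h3' : min c (q1 - Y1/p1) ≤ c := min_le_left _ _
    have hcp : min c (q1 - Y1/p1) * (p1+ρ) ≤ c * (p1+ρ) := by nlinarith
    nlinarith [hd0p2]
end
end

section
/- (Proposition 2b, zone II-2, type II) Assume p₁ > 0, p₂ > 0, p₂ ≤ p₁ + ρ (i.e. Δp = p₁ − p₂ ≥ −ρ), Y₁ < p₁·q₁, p₂·q₂ ≤ Y₂, and Y₂ − p₂·q₂ < p₁'·(q₁ − Y₁/p₁) (the point (Y₁, Y₂) lies strictly below the line ℓ₄). Then the quadruple (Y₁/p₁, 0, (Y₂ − p₂·q₂)/p₁', q₂) is a Nash equilibrium. -/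
open Filter

noncomputable section

/-- Proposition 2b (zone II-2, type II, `Δp ≥ −ρ`): the quadruple
`(Y₁/p₁, 0, (Y₂ − p₂q₂)/p₁', q₂)` is a Nash equilibrium. -/
theorem zoneII2_typeII_nash (Y1 Y2 q1 q2 ρ p1 p2 : ℝ)
    (hY1 : 0 < Y1) (hY2 : 0 < Y2) (hq1 : 0 < q1) (hq2 : 0 < q2) (hρ : 0 < ρ)
    (hp1 : 0 < p1) (hp2 : 0 < p2)
    (hΔ : p2 ≤ p1 + ρ)
    (h1 : Y1 < p1 * q1) (h2 : p2 * q2 ≤ Y2)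
    (hl4 : Y2 - p2 * q2 < (p1 + ρ) * (q1 - Y1 / p1)) :
    NashEq Y1 Y2 q1 q2 p1 p2 ρ (Y1 / p1) 0 ((Y2 - p2 * q2) / (p1 + ρ)) q2 := by
  have hp' : (0:ℝ) < p1 + ρ := by linarith
  set c0 := (Y2 - p2 * q2) / (p1 + ρ) with hc0
  have hc0nn : 0 ≤ c0 := div_nonneg (by linarith) hp'.le
  have ha0 : Y1 / p1 * p1 = Y1 := div_mul_cancel₀ _ hp1.ne'
  have ha0lt : Y1 / p1 < q1 := by
    rw [div_lt_iff₀ hp1]; linarith [h1, mul_comm q1 p1]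
  have hc0lt : c0 < q1 - Y1 / p1 := by
    rw [hc0, div_lt_iff₀ hp']
    nlinarith
  refine ⟨⟨by positivity, le_refl 0, by rw [ha0]; linarith⟩,
    ⟨hc0nn, hq2.le, ?_⟩, ?_, ?_⟩
  · rw [hc0, div_mul_cancel₀ _ hp'.ne']; linarith
  · intro a b ⟨hba, hbb, hbY⟩
    have hble : b * (p2 + ρ) ≥ 0 := mul_nonneg hbb (by linarith)
    have haY : a ≤ Y1 / p1 := by
      rw [le_div_iff₀ hp1]; linarith
    simp only [P1]
    have : max 0 (q2 - q2) = 0 := by simp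
    rw [this]
    have h1' : min a q1 ≤ Y1 / p1 := le_trans (min_le_left _ _) haY
    have h2' : min b 0 ≤ 0 := min_le_right _ _
    have h3' : min (Y1 / p1) q1 = Y1 / p1 := min_eq_left ha0lt.le
    have h4' : min (0:ℝ) 0 = 0 := min_self 0
    rw [h3', h4']; linarith
  · intro c d ⟨hbc, hbd, hbY⟩
    simp only [P2]
    have hM : max 0 (q1 - Y1 / p1) = q1 - Y1 / p1 := max_eq_right (by linarith)
    rw [hM]
    have hr1 : min q2 q2 = q2 := min_self q2
    have hr2 : min c0 (q1 - Y1 / p1) = c0 := min_eq_left hc0lt.le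
    rw [hr1, hr2]
    rcases le_or_gt q2 d with hd | hd
    · have hcle : c ≤ c0 := by
        rw [hc0, le_div_iff₀ hp']
        have : q2 * p2 ≤ d * p2 := mul_le_mul_of_nonneg_right hd hp2.le
        linarith [mul_comm c (p1 + ρ)]
      have : min c (q1 - Y1 / p1) ≤ c0 := le_trans (min_le_left _ _) hcle
      have : min d q2 ≤ q2 := min_le_right _ _
      linarith [min_le_left c (q1 - Y1 / p1)]
    · have hmd : min d q2 = d := min_eq_left hd.le
      rw [hmd]
      have hcle : c * (p1 + ρ) ≤ Y2 - d * p2 := by linarith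
      have key : c + d ≤ c0 + q2 := by
        rw [hc0, ← sub_le_iff_le_add, le_div_iff₀ hp']
        have : d * p2 ≤ d * (p1 + ρ) := mul_le_mul_of_nonneg_left hΔ hbd
        have h5 : d * (p1 + ρ) ≤ q2 * (p1 + ρ) := mul_le_mul_of_nonneg_right hd.le hp'.le
        nlinarith
      have : min c (q1 - Y1 / p1) ≤ c := min_le_left _ _
      linarith
end
end

section
/- (Proposition 2c, zone II-1, type I) Assume p₁ > 0, p₂ > 0, p₁ + ρ < p₂ (i.e. Δp = p₁ − p₂ < −ρ), Y₁ < p₁·q₁, p₂·q₂ ≤ Y₂, and Y₁/p₁ + Y₂/p₁' < q₁ (the point (Y₁, Y₂) lies strictly below the line ℓ₁). Then the quadruple (Y₁/p₁, 0, Y₂/p₁', 0) is a Nash equilibrium. -/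
open Filter

noncomputable section

/-- Proposition 2c (zone II-1, type I, `Δp < −ρ`): the quadruple
`(Y₁/p₁, 0, Y₂/p₁', 0)` is a Nash equilibrium. -/
theorem zoneII1_typeI_nash (Y1 Y2 q1 q2 ρ p1 p2 : ℝ)
    (hY1 : 0 < Y1) (hY2 : 0 < Y2) (hq1 : 0 < q1) (hq2 : 0 < q2) (hρ : 0 < ρ)
    (hp1 : 0 < p1) (hp2 : 0 < p2)
    (hΔ : p1 + ρ < p2)
    (h1 : Y1 < p1 * q1) (h2 : p2 * q2 ≤ Y2)
    (hl1 : Y1 / p1 + Y2 / (p1 + ρ) < q1) :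
    NashEq Y1 Y2 q1 q2 p1 p2 ρ (Y1 / p1) 0 (Y2 / (p1 + ρ)) 0 := by
  have hp1' : 0 < p1 + ρ := by linarith
  have ha0 : 0 < Y1 / p1 := div_pos hY1 hp1
  have hc0 : 0 < Y2 / (p1 + ρ) := div_pos hY2 hp1'
  have ha0q : Y1 / p1 < q1 := by rw [div_lt_iff₀ hp1]; linarith
  have hS1 : S1 Y1 p1 p2 ρ (Y1 / p1) 0 := by
    refine ⟨ha0.le, le_refl 0, ?_⟩
    rw [div_mul_cancel₀ _ hp1.ne']; linarith
  have hS2 : S2 Y2 p1 p2 ρ (Y2 / (p1 + ρ)) 0 := by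
    refine ⟨hc0.le, le_refl 0, ?_⟩
    rw [div_mul_cancel₀ _ hp1'.ne']; linarith
  have hP1eq : P1 q1 q2 (Y1 / p1) 0 (Y2 / (p1 + ρ)) 0 = Y1 / p1 := by
    simp [P1, min_eq_left ha0q.le, le_max_iff, hq2.le]
  have hP2eq : P2 q1 q2 (Y1 / p1) 0 (Y2 / (p1 + ρ)) 0 = Y2 / (p1 + ρ) := by
    have h : Y2 / (p1 + ρ) ≤ max 0 (q1 - Y1 / p1) := by
      rw [le_max_iff]; right; linarith
    simp [P2, min_eq_left h, min_eq_left hq2.le]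
  refine ⟨hS1, hS2, ?_, ?_⟩
  · intro a b ⟨ha, hb, hab⟩
    rw [hP1eq]
    have h1 : min a q1 ≤ a := min_le_left _ _
    have h2 : min b (max 0 (q2 - 0)) ≤ b := min_le_left _ _
    have h3 : (a + b) * p1 ≤ Y1 := by nlinarith
    have h4 : a + b ≤ Y1 / p1 := (le_div_iff₀ hp1).mpr h3
    unfold P1; linarith
  · intro c d ⟨hc, hd, hcd⟩
    rw [hP2eq]
    have h1 : min d q2 ≤ d := min_le_left _ _
    have h2 : min c (max 0 (q1 - Y1 / p1)) ≤ c := min_le_left _ _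
    have h3 : (c + d) * (p1 + ρ) ≤ Y2 := by nlinarith
    have h4 : c + d ≤ Y2 / (p1 + ρ) := (le_div_iff₀ hp1').mpr h3
    unfold P2; linarith
end
end

section
/- (Proposition 3, zone I, moderate price gap) Assume p₁ > 0, p₂ > 0, |p₁ − p₂| ≤ ρ (i.e. Δp ∈ [−ρ, ρ]), 0 < Y₁ < p₁·q₁ and 0 < Y₂ < p₂·q₂. Then the quadruple (Y₁/p₁, 0, 0, Y₂/p₂) is a Nash equilibrium, in which each consumer spends the entire income on the local market. -/
open Filter

noncomputable section

/-- Proposition 3 (zone I, `Δp ∈ [−ρ, ρ]`): the quadruple `(Y₁/p₁, 0, 0, Y₂/p₂)`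
is a Nash equilibrium, in which each consumer spends the entire income locally. -/
theorem zoneI_moderate_nash (Y1 Y2 q1 q2 ρ p1 p2 : ℝ)
    (hY1 : 0 < Y1) (hY2 : 0 < Y2) (hq1 : 0 < q1) (hq2 : 0 < q2) (hρ : 0 < ρ)
    (hp1 : 0 < p1) (hp2 : 0 < p2)
    (hΔ : |p1 - p2| ≤ ρ)
    (h1 : Y1 < p1 * q1) (h2 : Y2 < p2 * q2) :
    NashEq Y1 Y2 q1 q2 p1 p2 ρ (Y1 / p1) 0 0 (Y2 / p2) := by
  have hΔ1 : p1 ≤ p2 + ρ := by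
    have := abs_le.mp hΔ; linarith [this.1, this.2]
  have hΔ2 : p2 ≤ p1 + ρ := by
    have := abs_le.mp hΔ; linarith [(abs_le.mp hΔ).1]
  have ha0 : Y1 / p1 < q1 := (div_lt_iff₀' hp1).mpr h1
  have hd0 : Y2 / p2 < q2 := (div_lt_iff₀' hp2).mpr h2
  have ha0pos : 0 < Y1 / p1 := div_pos hY1 hp1
  have hd0pos : 0 < Y2 / p2 := div_pos hY2 hp2
  refine ⟨⟨le_of_lt ha0pos, le_refl 0, by rw [div_mul_cancel₀ _ hp1.ne']; linarith⟩,
    ⟨le_refl 0, le_of_lt hd0pos, by rw [div_mul_cancel₀ _ hp2.ne']; linarith⟩, ?_, ?_⟩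
  · rintro a b ⟨ha, hb, hab⟩
    have heq : P1 q1 q2 (Y1 / p1) 0 0 (Y2 / p2) = Y1 / p1 := by
      simp [P1, min_eq_left ha0.le, le_max_iff]
    rw [heq]
    have h3 : min a q1 ≤ a := min_le_left _ _
    have h4 : min b (max 0 (q2 - Y2 / p2)) ≤ b := min_le_left _ _
    have h5 : a * p1 + b * p1 ≤ Y1 := by nlinarith
    have h6 : a + b ≤ Y1 / p1 := by rw [le_div_iff₀ hp1]; linarith
    unfold P1; linarith
  · rintro c d ⟨hc, hd, hcd⟩
    have heq : P2 q1 q2 (Y1 / p1) 0 0 (Y2 / p2) = Y2 / p2 := by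
      simp [P2, min_eq_left hd0.le, le_max_iff]
    rw [heq]
    have h3 : min d q2 ≤ d := min_le_left _ _
    have h4 : min c (max 0 (q1 - Y1 / p1)) ≤ c := min_le_left _ _
    have h5 : c * p2 + d * p2 ≤ Y2 := by nlinarith
    have h6 : c + d ≤ Y2 / p2 := by rw [le_div_iff₀ hp2]; linarith
    unfold P2; linarith
end
end

section
/- (Proposition 3, zones I-1/I-2, Δp > ρ) Assume p₁ > 0, p₂ > 0, p₁ > p₂ + ρ (i.e. Δp > ρ), 0 < Y₁ < p₁·q₁, 0 < Y₂ < p₂·q₂, and Y₁/p₂' + Y₂/p₂ ≥ q₂ (the point (Y₁, Y₂) lies on or above the line ℓ₂). Then the quadruple ((Y₁ − p₂'·(q₂ − Y₂/p₂))/p₁, q₂ − Y₂/p₂, 0, Y₂/p₂) is a Nash equilibrium. -/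
open Filter

noncomputable section

/-- Proposition 3 (zones I-1/I-2, `Δp > ρ`): the quadruple
`((Y₁ − p₂'(q₂ − Y₂/p₂))/p₁, q₂ − Y₂/p₂, 0, Y₂/p₂)` is a Nash equilibrium. -/
theorem zoneI12_highgap_nash (Y1 Y2 q1 q2 ρ p1 p2 : ℝ)
    (hY1 : 0 < Y1) (hY2 : 0 < Y2) (hq1 : 0 < q1) (hq2 : 0 < q2) (hρ : 0 < ρ)
    (hp1 : 0 < p1) (hp2 : 0 < p2)
    (hΔ : p2 + ρ < p1)
    (h1 : Y1 < p1 * q1) (h2 : Y2 < p2 * q2)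
    (hl2 : Y1 / (p2 + ρ) + Y2 / p2 ≥ q2) :
    NashEq Y1 Y2 q1 q2 p1 p2 ρ ((Y1 - (p2 + ρ) * (q2 - Y2 / p2)) / p1)
      (q2 - Y2 / p2) 0 (Y2 / p2) := by
  have hp2' : (0:ℝ) < p2 + ρ := by linarith
  set d0 := Y2 / p2 with hd0
  set b0 := q2 - d0 with hb0
  set a0 := (Y1 - (p2 + ρ) * b0) / p1 with ha0
  have hd0q2 : d0 < q2 := by
    rw [hd0, div_lt_iff₀ hp2]; nlinarith
  have hd0nn : 0 ≤ d0 := div_nonneg hY2.le hp2.le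
  have hb0pos : 0 < b0 := by rw [hb0]; linarith
  have hY1b : (p2 + ρ) * b0 ≤ Y1 := by
    have hb : b0 ≤ Y1 / (p2 + ρ) := by rw [hb0]; linarith
    calc (p2+ρ)*b0 ≤ (p2+ρ)*(Y1/(p2+ρ)) := by nlinarith
      _ = Y1 := by field_simp
  have ha0nn : 0 ≤ a0 := div_nonneg (by linarith) hp1.le
  have ha0q1 : a0 < q1 := by
    rw [ha0, div_lt_iff₀ hp1]; nlinarith
  have hbudget1 : a0 * p1 + b0 * (p2+ρ) = Y1 := by
    rw [ha0]; field_simp; ring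
  have hd0p2 : d0 * p2 = Y2 := by rw [hd0]; field_simp
  refine ⟨⟨ha0nn, hb0pos.le, by rw [hbudget1]⟩,
    ⟨le_refl 0, hd0nn, by simp [hd0p2]⟩, ?_, ?_⟩
  · rintro a b ⟨hann, hbnn, hab⟩
    have hmax : max 0 (q2 - d0) = b0 := max_eq_right (by linarith)
    simp only [P1, hmax]
    have hP1eq : min a0 q1 + min b0 b0 = a0 + b0 := by
      rw [min_self, min_eq_left ha0q1.le]
    rw [hP1eq]
    set m := min b b0 with hm
    have hmle : m ≤ b := min_le_left _ _
    have hmle0 : m ≤ b0 := min_le_right _ _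
    have hap : a * p1 + m * (p2+ρ) ≤ Y1 := by nlinarith
    have haq : min a q1 ≤ a := min_le_left _ _
    nlinarith [mul_nonneg (sub_nonneg.2 hmle0) (by linarith : (0:ℝ) ≤ p1 - (p2+ρ))]
  · rintro c d ⟨hcnn, hdnn, hcd⟩
    simp only [P2]
    have hdq : min d q2 ≤ d := min_le_left _ _
    have hcq : min c (max 0 (q1 - a0)) ≤ c := min_le_left _ _
    have hcd0 : c + d ≤ d0 := by
      have : p2 * (c + d) ≤ c*(p1+ρ) + d*p2 := by nlinarith
      rw [hd0, le_div_iff₀ hp2]; linarith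
    have hr : min d0 q2 + min 0 (max 0 (q1 - a0)) = d0 := by
      rw [min_eq_left hd0q2.le, min_eq_left (le_max_left _ _)]; ring
    rw [hr]; linarith
end
end

section
/- (Proposition 3c, zone I-3, Δp > ρ) Assume p₁ > 0, p₂ > 0, p₁ > p₂ + ρ (i.e. Δp > ρ), 0 < Y₁ < p₁·q₁, 0 < Y₂ < p₂·q₂, and Y₁/p₂' + Y₂/p₂ < q₂ (the point (Y₁, Y₂) lies strictly below the line ℓ₂). Then the quadruple (0, Y₁/p₂', 0, Y₂/p₂) is a Nash equilibrium, in which consumer I spends the entire income Y₁ on region II's market. -/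
open Filter

noncomputable section

/-- Proposition 3c (zone I-3, `Δp > ρ`): the quadruple `(0, Y₁/p₂', 0, Y₂/p₂)` is
a Nash equilibrium, in which consumer I spends the entire income on region II's
market. -/
theorem zoneI3_highgap_nash (Y1 Y2 q1 q2 ρ p1 p2 : ℝ)
    (hY1 : 0 < Y1) (hY2 : 0 < Y2) (hq1 : 0 < q1) (hq2 : 0 < q2) (hρ : 0 < ρ)
    (hp1 : 0 < p1) (hp2 : 0 < p2)
    (hΔ : p2 + ρ < p1)
    (h1 : Y1 < p1 * q1) (h2 : Y2 < p2 * q2)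
    (hl2 : Y1 / (p2 + ρ) + Y2 / p2 < q2) :
    NashEq Y1 Y2 q1 q2 p1 p2 ρ 0 (Y1 / (p2 + ρ)) 0 (Y2 / p2) := by
  have hp2' : (0:ℝ) < p2 + ρ := by linarith
  have hb0 : Y1 / (p2 + ρ) * (p2 + ρ) = Y1 := div_mul_cancel₀ _ hp2'.ne'
  have hd0 : Y2 / p2 * p2 = Y2 := div_mul_cancel₀ _ hp2.ne'
  have hb0pos : 0 < Y1 / (p2 + ρ) := div_pos hY1 hp2'
  have hd0pos : 0 < Y2 / p2 := div_pos hY2 hp2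
  have hkey : Y1 / (p2 + ρ) ≤ q2 - Y2 / p2 := by linarith
  have hP1 : P1 q1 q2 0 (Y1 / (p2 + ρ)) 0 (Y2 / p2) = Y1 / (p2 + ρ) := by
    unfold P1
    rw [min_eq_left hq1.le, max_eq_right (by linarith), min_eq_left hkey, zero_add]
  have hP2 : P2 q1 q2 0 (Y1 / (p2 + ρ)) 0 (Y2 / p2) = Y2 / p2 := by
    unfold P2
    rw [min_eq_left (by nlinarith [hd0] : Y2 / p2 ≤ q2),
        min_eq_left (by positivity : (0:ℝ) ≤ max 0 (q1 - 0)), add_zero]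
  refine ⟨⟨le_refl 0, hb0pos.le, by nlinarith⟩, ⟨le_refl 0, hd0pos.le, by nlinarith⟩, ?_, ?_⟩
  · rintro a b ⟨ha, hb, hab⟩
    rw [hP1]
    have h1 : min a q1 ≤ a := min_le_left _ _
    have h2 : min b (max 0 (q2 - Y2 / p2)) ≤ b := min_le_left _ _
    have : (a + b) * (p2 + ρ) ≤ Y1 := by nlinarith
    have : a + b ≤ Y1 / (p2 + ρ) := (le_div_iff₀ hp2').mpr this
    unfold P1; linarith
  · rintro c d ⟨hc, hd, hcd⟩
    rw [hP2]
    have h1 : min d q2 ≤ d := min_le_left _ _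
    have h2 : min c (max 0 (q1 - 0)) ≤ c := min_le_left _ _
    have : (c + d) * p2 ≤ Y2 := by nlinarith
    have : c + d ≤ Y2 / p2 := (le_div_iff₀ hp2).mpr this
    unfold P2; linarith
end
end

section
/- (Proposition 4a, zone IV-1) Assume p₁ > 0, p₂ > 0, p₁·q₁ ≤ Y₁, 0 < Y₂ < p₂·q₂, and p₁·q₁ + p₂'·(q₂ − Y₂/p₂) ≤ Y₁ (the point (Y₁, Y₂) lies on or above the line ℓ₃). Then the quadruple (q₁, q₂ − Y₂/p₂, 0, Y₂/p₂) is an expenditure-minimal Nash equilibrium, and every expenditure-minimal Nash equilibrium equals it. -/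
open Filter

noncomputable section

set_option maxHeartbeats 1600000 in
/-- Proposition 4a (zone IV-1): the quadruple `(q₁, q₂ − Y₂/p₂, 0, Y₂/p₂)` is the
unique expenditure-minimal Nash equilibrium. -/
theorem zoneIV1_nash (Y1 Y2 q1 q2 ρ p1 p2 : ℝ)
    (hY1 : 0 < Y1) (hY2 : 0 < Y2) (hq1 : 0 < q1) (hq2 : 0 < q2) (hρ : 0 < ρ)
    (hp1 : 0 < p1) (hp2 : 0 < p2)
    (h1 : p1 * q1 ≤ Y1) (h2 : Y2 < p2 * q2)
    (hl3 : p1 * q1 + (p2 + ρ) * (q2 - Y2 / p2) ≤ Y1) :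
    ExpMinNE Y1 Y2 q1 q2 p1 p2 ρ q1 (q2 - Y2 / p2) 0 (Y2 / p2) ∧
    (∀ a0 b0 c0 d0 : ℝ, ExpMinNE Y1 Y2 q1 q2 p1 p2 ρ a0 b0 c0 d0 →
      a0 = q1 ∧ b0 = q2 - Y2 / p2 ∧ c0 = 0 ∧ d0 = Y2 / p2) := by
  have hp2' : 0 < p2 + ρ := by linarith
  have hp1' : 0 < p1 + ρ := by linarith
  set D := Y2 / p2 with hD
  have hDp2 : D * p2 = Y2 := div_mul_cancel₀ Y2 hp2.ne'
  have hD0 : 0 < D := div_pos hY2 hp2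
  have hDq2 : D < q2 := by
    rw [hD, div_lt_iff₀ hp2]; nlinarith
  set B := q2 - D with hB
  have hB0 : 0 < B := by rw [hB]; linarith
  have hmaxB : max 0 (q2 - D) = B := by
    rw [hB]; exact max_eq_right (by linarith)
  -- membership of the candidate strategies
  have hS1star : S1 Y1 p1 p2 ρ q1 B := ⟨hq1.le, hB0.le, by nlinarith⟩
  have hS2star : S2 Y2 p1 p2 ρ 0 D := ⟨le_refl 0, hD0.le, by nlinarith⟩
  constructor
  · -- existence
    refine ⟨⟨hS1star, hS2star, ?_, ?_⟩, ?_, ?_⟩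
    · -- Nash for I
      intro a b ⟨ha, hb, hab⟩
      have hv : P1 q1 q2 q1 B 0 D = q1 + B := by
        simp [P1, hmaxB]
      rw [hv]
      have := min_le_right a q1
      have h2' : min b (max 0 (q2 - D)) ≤ B := (min_le_right _ _).trans_eq hmaxB
      simp only [P1]; linarith
    · -- Nash for II
      intro c d ⟨hc, hd, hcd⟩
      have hv : P2 q1 q2 q1 B 0 D = D := by
        simp [P2, min_eq_left hDq2.le]
      rw [hv]
      have hdD : d ≤ D := by
        rw [hD, le_div_iff₀ hp2]; nlinarith
      have : min c (max 0 (q1 - q1)) = 0 := by simp [min_eq_right hc]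
      simp only [P2, this, add_zero]
      exact (min_le_left d q2).trans hdD
    · -- expenditure minimality for I
      intro a b ⟨ha, hb, hab⟩ hP
      have hv : P1 q1 q2 q1 B 0 D = q1 + B := by simp [P1, hmaxB]
      rw [hv] at hP
      have h1' : min a q1 ≤ q1 := min_le_right _ _
      have h2' : min b (max 0 (q2 - D)) ≤ B := (min_le_right _ _).trans_eq hmaxB
      simp only [P1] at hP
      have hminA : min a q1 = q1 := by linarith
      have hminB : min b (max 0 (q2 - D)) = B := by linarith
      have haq : q1 ≤ a := by
        rcases le_total a q1 with h | h
        · rw [min_eq_left h] at hminA; linarith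
        · exact h
      have hbB : B ≤ b := by
        rcases le_total b (max 0 (q2 - D)) with h | h
        · rw [min_eq_left h] at hminB; linarith
        · rw [hmaxB] at h; exact h
      nlinarith [mul_le_mul_of_nonneg_right haq hp1.le,
        mul_le_mul_of_nonneg_right hbB hp2'.le]
    · -- expenditure minimality for II
      intro c d ⟨hc, hd, hcd⟩ hP
      have hv : P2 q1 q2 q1 B 0 D = D := by
        simp [P2, min_eq_left hDq2.le]
      rw [hv] at hP
      have : min c (max 0 (q1 - q1)) = 0 := by simp [min_eq_right hc]
      simp only [P2, this, add_zero] at hP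
      have hDd : D ≤ d := hP ▸ min_le_left d q2
      nlinarith [mul_le_mul_of_nonneg_right hDd hp2.le,
        mul_nonneg hc hp1'.le]
  · -- uniqueness
    intro a0 b0 c0 d0 hE
    obtain ⟨⟨⟨ha0, hb0, hbud1⟩, ⟨hc0, hd0, hbud2⟩, hN1, hN2⟩, hM1, hM2⟩ := hE
    have hd0D : d0 ≤ D := by
      rw [hD, le_div_iff₀ hp2]; nlinarith
    have hd0q2 : d0 < q2 := hd0D.trans_lt hDq2
    have hM0 : max 0 (q2 - d0) = q2 - d0 := max_eq_right (by linarith)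
    have hBd0 : B ≤ q2 - d0 := by rw [hB]; linarith
    have hP1star : P1 q1 q2 q1 B c0 d0 = q1 + B := by
      simp [P1, hM0, min_eq_left hBd0]
    have hP1ge : q1 + B ≤ P1 q1 q2 a0 b0 c0 d0 := hP1star ▸ hN1 q1 B hS1star
    -- Claim: b0 ≤ q2 - d0
    have hb0le : b0 ≤ q2 - d0 := by
      by_contra hcon
      push_neg at hcon
      have hmem : S1 Y1 p1 p2 ρ a0 (q2 - d0) :=
        ⟨ha0, by linarith, by nlinarith [mul_le_mul_of_nonneg_right hcon.le hp2'.le]⟩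
      have hpay : P1 q1 q2 a0 (q2 - d0) c0 d0 = P1 q1 q2 a0 b0 c0 d0 := by
        simp [P1, hM0, min_eq_right hcon.le]
      have h := hM1 a0 (q2 - d0) hmem hpay
      linarith [mul_lt_mul_of_pos_right hcon hp2']
    -- key step: q1 ≤ a0
    have key : q1 ≤ a0 := by
      by_contra hcon
      push_neg at hcon
      have hP1eq : P1 q1 q2 a0 b0 c0 d0 = a0 + b0 := by
        simp [P1, hM0, min_eq_left hcon.le, min_eq_left hb0le]
      rw [hP1eq] at hP1ge
      have hb0big : q1 - a0 + B ≤ b0 := by linarith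
      rcases lt_or_ge p1 (p2 + ρ) with hcase | hcase
      · -- I can profitably shift budget from good 2 to good 1
        set t := min ((q1 - a0) / (p2 + ρ)) (b0 / p1) with ht
        have ht0 : 0 < t :=
          lt_min (div_pos (by linarith) hp2') (div_pos (by linarith) hp1)
        have ht1 : t * (p2 + ρ) ≤ q1 - a0 :=
          (le_div_iff₀ hp2').mp (min_le_left _ _)
        have ht2 : t * p1 ≤ b0 := (le_div_iff₀ hp1).mp (min_le_right _ _)
        have hmem : S1 Y1 p1 p2 ρ (a0 + t * (p2 + ρ)) (b0 - t * p1) := by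
          refine ⟨by linarith [mul_pos ht0 hp2'], by linarith, ?_⟩
          have heq : (a0 + t * (p2 + ρ)) * p1 + (b0 - t * p1) * (p2 + ρ)
              = a0 * p1 + b0 * (p2 + ρ) := by ring
          linarith
        have hle := hN1 _ _ hmem
        rw [hP1eq] at hle
        have hval : P1 q1 q2 (a0 + t * (p2 + ρ)) (b0 - t * p1) c0 d0
            = a0 + t * (p2 + ρ) + (b0 - t * p1) := by
          have h1' : a0 + t * (p2 + ρ) ≤ q1 := by linarith
          have h2' : b0 - t * p1 ≤ q2 - d0 := by linarith [mul_pos ht0 hp1]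
          simp [P1, hM0, min_eq_left h1', min_eq_left h2']
        rw [hval] at hle
        have hdiff : t * p1 < t * (p2 + ρ) := mul_lt_mul_of_pos_left hcase ht0
        linarith
      · -- here p1 + ρ > p2; analyse consumer II
        have hmaxN : max 0 (q1 - a0) = q1 - a0 := max_eq_right (by linarith)
        have hc0N : c0 ≤ q1 - a0 := by
          by_contra hcc
          push_neg at hcc
          have hmem : S2 Y2 p1 p2 ρ (q1 - a0) d0 :=
            ⟨by linarith, hd0, by nlinarith [mul_le_mul_of_nonneg_right hcc.le hp1'.le]⟩
          have hpay : P2 q1 q2 a0 b0 (q1 - a0) d0 = P2 q1 q2 a0 b0 c0 d0 := by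
            simp [P2, hmaxN, min_eq_right hcc.le]
          have h := hM2 (q1 - a0) d0 hmem hpay
          linarith [mul_lt_mul_of_pos_right hcc hp1']
        have hP2eq : P2 q1 q2 a0 b0 c0 d0 = d0 + c0 := by
          simp [P2, hmaxN, min_eq_left hd0q2.le, min_eq_left hc0N]
        have hc00 : c0 = 0 := by
          by_contra hcc
          have hc0pos : 0 < c0 := lt_of_le_of_ne hc0 (Ne.symm hcc)
          set s := min (c0 / p2) ((q2 - d0) / (p1 + ρ)) with hs
          have hs0 : 0 < s :=
            lt_min (div_pos hc0pos hp2) (div_pos (by linarith) hp1')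
          have hs1 : s * p2 ≤ c0 := (le_div_iff₀ hp2).mp (min_le_left _ _)
          have hs2 : s * (p1 + ρ) ≤ q2 - d0 := (le_div_iff₀ hp1').mp (min_le_right _ _)
          have hmem : S2 Y2 p1 p2 ρ (c0 - s * p2) (d0 + s * (p1 + ρ)) := by
            refine ⟨by linarith, by linarith [mul_pos hs0 hp1'], ?_⟩
            have heq : (c0 - s * p2) * (p1 + ρ) + (d0 + s * (p1 + ρ)) * p2
                = c0 * (p1 + ρ) + d0 * p2 := by ring
            linarith
          have hle := hN2 _ _ hmem
          rw [hP2eq] at hle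
          have hval : P2 q1 q2 a0 b0 (c0 - s * p2) (d0 + s * (p1 + ρ))
              = d0 + s * (p1 + ρ) + (c0 - s * p2) := by
            have h1' : d0 + s * (p1 + ρ) ≤ q2 := by linarith
            have h2' : c0 - s * p2 ≤ q1 - a0 := by linarith [mul_pos hs0 hp2]
            simp [P2, hmaxN, min_eq_left h1', min_eq_left h2']
          rw [hval] at hle
          have hdiff : s * p2 < s * (p1 + ρ) :=
            mul_lt_mul_of_pos_left (by linarith : p2 < p1 + ρ) hs0
          linarith
        -- now d0 = D
        have hle := hN2 0 D hS2star
        have hval : P2 q1 q2 a0 b0 0 D = D := by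
          simp [P2, hmaxN, min_eq_left hDq2.le, min_eq_left (show (0:ℝ) ≤ q1 - a0 by linarith)]
        rw [hval, hP2eq, hc00, add_zero] at hle
        -- hle : D ≤ d0, so d0 = D and b0 ≤ B: contradiction with hP1ge
        have : b0 ≤ B := by rw [hB]; linarith
        linarith
    -- with q1 ≤ a0 we conclude
    have hmaxN0 : max 0 (q1 - a0) = 0 := max_eq_left (by linarith)
    have hP2eq : P2 q1 q2 a0 b0 c0 d0 = min d0 q2 := by
      simp [P2, hmaxN0, min_eq_right hc0]
    have hDd0 : D ≤ d0 := by
      have hle := hN2 0 D hS2star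
      have hval : P2 q1 q2 a0 b0 0 D = D := by
        simp [P2, hmaxN0, min_eq_left hDq2.le]
      rw [hval, hP2eq] at hle
      exact hle.trans (min_le_left _ _)
    have hd0eq : d0 = D := le_antisymm hd0D hDd0
    have hc0le : c0 ≤ 0 := by
      by_contra hcc
      push_neg at hcc
      nlinarith [mul_pos hcc hp1', hbud2, hDp2, hd0eq]
    have hc0eq : c0 = 0 := le_antisymm hc0le hc0
    have hBb0 : B ≤ b0 := by
      have hP1eq : P1 q1 q2 a0 b0 c0 d0 = q1 + min b0 B := by
        rw [P1, min_eq_right key, hd0eq, hmaxB]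
      rw [hP1eq] at hP1ge
      have := min_le_left b0 B
      rcases le_total b0 B with h | h
      · rw [min_eq_left h] at hP1ge; linarith
      · exact h
    have hP1eqv : P1 q1 q2 a0 b0 c0 d0 = q1 + B := by
      rw [P1, min_eq_right key, hd0eq, hmaxB, min_eq_right hBb0]
    have hexp := hM1 q1 B hS1star (hP1star.trans hP1eqv.symm)
    have ha0eq : a0 = q1 := by
      have h1' : a0 * p1 ≤ q1 * p1 := by
        linarith [mul_le_mul_of_nonneg_right hBb0 hp2'.le]
      exact le_antisymm (le_of_mul_le_mul_right h1' hp1) key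
    have hb0eq : b0 = B := by
      have h1' : b0 * (p2 + ρ) ≤ B * (p2 + ρ) := by
        linarith [mul_le_mul_of_nonneg_right key hp1.le]
      exact le_antisymm (le_of_mul_le_mul_right h1' hp2') hBb0
    exact ⟨ha0eq, hb0eq, hc0eq, hd0eq⟩
end
end

section
/- (Proposition 4b, zone IV-2, type I) Assume p₁ > 0, p₂ > 0, p₁ ≤ p₂ + ρ (i.e. Δp ≤ ρ), p₁·q₁ ≤ Y₁, 0 < Y₂ < p₂·q₂, and Y₁ − p₂'·(q₂ − Y₂/p₂) < p₁·q₁ (the point (Y₁, Y₂) lies strictly below the line ℓ₃). Then the quadruple (q₁, (Y₁ − p₁·q₁)/p₂', 0, Y₂/p₂) is a Nash equilibrium. -/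
open Filter

noncomputable section

/-- Proposition 4b (zone IV-2, type I, `Δp ≤ ρ`): the quadruple
`(q₁, (Y₁ − p₁q₁)/p₂', 0, Y₂/p₂)` is a Nash equilibrium. -/
theorem zoneIV2_typeI_nash (Y1 Y2 q1 q2 ρ p1 p2 : ℝ)
    (hY1 : 0 < Y1) (hY2 : 0 < Y2) (hq1 : 0 < q1) (hq2 : 0 < q2) (hρ : 0 < ρ)
    (hp1 : 0 < p1) (hp2 : 0 < p2)
    (hΔ : p1 ≤ p2 + ρ)
    (h1 : p1 * q1 ≤ Y1) (h2 : Y2 < p2 * q2)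
    (hl3 : Y1 - (p2 + ρ) * (q2 - Y2 / p2) < p1 * q1) :
    NashEq Y1 Y2 q1 q2 p1 p2 ρ q1 ((Y1 - p1 * q1) / (p2 + ρ)) 0 (Y2 / p2) := by

  have hp2ρ : 0 < p2 + ρ := by linarith
  set b0 := (Y1 - p1 * q1) / (p2 + ρ) with hb0
  set d0 := Y2 / p2 with hd0
  have hb0mul : b0 * (p2 + ρ) = Y1 - p1 * q1 := div_mul_cancel₀ _ (ne_of_gt hp2ρ)
  have hb0nn : 0 ≤ b0 := div_nonneg (by linarith) hp2ρ.le
  have hd0mul : d0 * p2 = Y2 := div_mul_cancel₀ _ (ne_of_gt hp2)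
  have hd0nn : 0 ≤ d0 := div_nonneg hY2.le hp2.le
  have hd0lt : d0 < q2 := by nlinarith
  have hmax : max 0 (q2 - d0) = q2 - d0 := max_eq_right (by linarith)
  have hb0lt : b0 < q2 - d0 := by nlinarith
  refine ⟨⟨hq1.le, hb0nn, by nlinarith⟩, ⟨le_refl 0, hd0nn, by linarith⟩, ?_, ?_⟩
  · rintro a b ⟨ha, hb, hab⟩
    unfold P1
    rw [hmax, min_self, min_eq_left hb0lt.le]
    rcases le_or_gt a q1 with hle | hlt
    · have key : a + b ≤ q1 + b0 := by
        nlinarith [mul_nonneg (sub_nonneg.2 hle) (sub_nonneg.2 hΔ)]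
      linarith [min_le_left a q1, min_le_left b (q2 - d0)]
    · have key : b ≤ b0 := by nlinarith
      linarith [min_le_right a q1, min_le_left b (q2 - d0)]
  · rintro c d ⟨hc, hd, hcd⟩
    unfold P2
    have : q1 - q1 = 0 := by ring
    rw [this, max_self, min_eq_right hc, min_eq_right (le_refl 0),
      min_eq_left hd0lt.le]
    have : d ≤ d0 := by nlinarith
    linarith [min_le_left d q2]
end
end

section
/- (Zone II-2, case 2.1: degenerate ℓ₄-equilibrium) Let Y₁, q₁, ρ > 0 and B > 0, and define g(x) = (1/q₁)·(Y₁ + B·x/(x + ρ)) for x ≥ 0, and k = (1/(2·q₁))·(√((ρ·q₁ − Y₁ − B)² + 4·q₁·ρ·Y₁) − (ρ·q₁ − Y₁ − B)). Then: (i) k > 0 and g(k) = k; (ii) g is strictly increasing on [0, ∞); (iii) for every p₀ > k, the sequence defined by p_{t+1} = g(p_t) is strictly decreasing, satisfies p_t > k for all t, and converges to k as t → ∞. -/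
open Filter

noncomputable section

/-- The downward price-adjustment map for `p₁` in zone II-2, with
`B = Y₂ − p_{2,0} q₂ > 0`. -/
def g (Y1 q1 ρ B x : ℝ) : ℝ := (Y1 + B * (x / (x + ρ))) / q1

/-- The critical threshold `k` from Proposition 2 (zone II-2, case II,ii-2a). -/
def kcrit (Y1 q1 ρ B : ℝ) : ℝ :=
  (Real.sqrt ((ρ * q1 - Y1 - B) ^ 2 + 4 * q1 * ρ * Y1) - (ρ * q1 - Y1 - B)) / (2 * q1)

/-- Zone II-2, case 2.1 (degenerate ℓ₄-equilibrium): `k` is a positive fixed point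
of `g`, `g` is strictly increasing on `[0, ∞)`, and every orbit of `g` started
above `k` decreases strictly, stays above `k`, and converges to `k`. -/
theorem degenerate_ell4_equilibrium (Y1 q1 ρ B : ℝ)
    (hY1 : 0 < Y1) (hq1 : 0 < q1) (hρ : 0 < ρ) (hB : 0 < B) :
    0 < kcrit Y1 q1 ρ B ∧
    g Y1 q1 ρ B (kcrit Y1 q1 ρ B) = kcrit Y1 q1 ρ B ∧
    StrictMonoOn (g Y1 q1 ρ B) (Set.Ici 0) ∧
    (∀ p : ℕ → ℝ, kcrit Y1 q1 ρ B < p 0 → (∀ t, p (t + 1) = g Y1 q1 ρ B (p t)) →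
      StrictAnti p ∧ (∀ t, kcrit Y1 q1 ρ B < p t) ∧
      Tendsto p atTop (nhds (kcrit Y1 q1 ρ B))) := by
  set a : ℝ := ρ * q1 - Y1 - B with ha
  set c : ℝ := 4 * q1 * ρ * Y1 with hc
  have hcpos : 0 < c := by positivity
  set s : ℝ := Real.sqrt (a ^ 2 + c) with hs
  have hsnn : 0 ≤ s := Real.sqrt_nonneg _
  have hs2 : s ^ 2 = a ^ 2 + c := Real.sq_sqrt (by positivity)
  have hsa : a < s := by nlinarith [sq_nonneg (s - a)]
  have hsa' : -a < s := by nlinarith [sq_nonneg (s + a)]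
  have hspos : 0 < s := by linarith
  set k : ℝ := kcrit Y1 q1 ρ B with hkdef
  have hk : k = (s - a) / (2 * q1) := rfl
  have hkpos : 0 < k := by rw [hk]; exact div_pos (by linarith) (by linarith)
  have h2k : 2 * q1 * k = s - a := by rw [hk]; field_simp
  have hfix : q1 * k ^ 2 + a * k - ρ * Y1 = 0 := by nlinarith [h2k, hs2]
  have hkρ : (0:ℝ) < k + ρ := by linarith
  clear_value a c s k
  -- fixed point
  have hgk : g Y1 q1 ρ B k = k := by
    unfold g
    rw [div_eq_iff hq1.ne']
    field_simp
    linear_combination -hfix + k * ha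
  -- strict monotonicity
  have hmono : StrictMonoOn (g Y1 q1 ρ B) (Set.Ici 0) := by
    intro x hx y hy hxy
    simp only [Set.mem_Ici] at hx hy
    have hxρ : 0 < x + ρ := by linarith
    have hyρ : 0 < y + ρ := by linarith
    have h1 : x / (x + ρ) < y / (y + ρ) := by
      rw [div_lt_div_iff₀ hxρ hyρ]; nlinarith
    unfold g
    rw [div_lt_div_iff₀ hq1 hq1]
    have := mul_lt_mul_of_pos_left h1 hB
    nlinarith
  -- g x < x for x > k
  have key : ∀ x, k < x → g Y1 q1 ρ B x < x := by
    intro x hx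
    have hx0 : 0 < x := hkpos.trans hx
    have hxρ : 0 < x + ρ := by linarith
    have hnum : 0 < q1 * x ^ 2 + a * x - ρ * Y1 := by
      nlinarith [mul_pos (sub_pos.mpr hx) (show 0 < q1 * x + q1 * k + a by nlinarith [h2k])]
    unfold g
    rw [div_lt_iff₀ hq1]
    have heq : Y1 + B * (x / (x + ρ)) = (Y1 * (x + ρ) + B * x) / (x + ρ) := by
      field_simp
    rw [heq, div_lt_iff₀ hxρ]
    have h3 : x * q1 * (x + ρ) - (Y1 * (x + ρ) + B * x) = q1 * x ^ 2 + a * x - ρ * Y1 := by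
      rw [ha]; ring
    linarith [hnum, h3]
  refine ⟨hkpos, hgk, hmono, ?_⟩
  intro p hp0 hrec
  have hpt : ∀ t, k < p t := by
    intro t
    induction t with
    | zero => exact hp0
    | succ n ih =>
      rw [hrec n, ← hgk]
      exact hmono (le_of_lt hkpos) (le_of_lt (hkpos.trans ih)) ih
  have hanti : StrictAnti p := by
    apply strictAnti_nat_of_succ_lt
    intro n
    rw [hrec n]
    exact key (p n) (hpt n)
  have hbdd : BddBelow (Set.range p) := ⟨k, by rintro _ ⟨t, rfl⟩; exact (hpt t).le⟩
  have htend : Tendsto p atTop (nhds (⨅ i, p i)) :=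
    tendsto_atTop_ciInf hanti.antitone hbdd
  set L : ℝ := ⨅ i, p i with hL
  clear_value L
  have hLk : k ≤ L := hL ▸ le_ciInf fun t => (hpt t).le
  have hLρ : (0:ℝ) < L + ρ := by linarith
  have hcont : ContinuousAt (g Y1 q1 ρ B) L := by
    unfold g
    exact (continuousAt_const.add (continuousAt_const.mul
      (continuousAt_id.div (continuousAt_id.add continuousAt_const) hLρ.ne'))).div_const q1
  have h1 : Tendsto (fun t => p (t + 1)) atTop (nhds L) :=
    htend.comp (tendsto_add_atTop_nat 1)
  have h2 : Tendsto (fun t => g Y1 q1 ρ B (p t)) atTop (nhds (g Y1 q1 ρ B L)) :=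
    hcont.tendsto.comp htend
  have hgL : g Y1 q1 ρ B L = L := by
    apply tendsto_nhds_unique h2
    simpa only [← hrec] using h1
  have hLfix : q1 * L ^ 2 + a * L - ρ * Y1 = 0 := by
    unfold g at hgL
    rw [div_eq_iff hq1.ne'] at hgL
    field_simp at hgL
    linear_combination -hgL + L * ha
  have hLeq : L = k := by
    have hfac : (L - k) * (q1 * L + q1 * k + a) = 0 := by linear_combination hLfix - hfix
    have hpos : 0 < q1 * L + q1 * k + a := by
      have h4 : q1 * k ≤ q1 * L := mul_le_mul_of_nonneg_left hLk hq1.le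
      linarith [h2k, h4, hspos]
    rcases mul_eq_zero.mp hfac with h | h
    · linarith
    · linarith
  exact ⟨hanti, hpt, hLeq ▸ htend⟩
end
end
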